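/- arXiv:1212.3465 — 7 statements merged into one kernel-verified Lean document; each statement's English description precedes it below -/
import Mathlib

section
/- Let λ₁, …, λ_k be finitely many nonzero complex numbers. Then there exists a positive integer N such that Re(λ_j^N) > 0 for every j = 1, …, k. -/
/-- Diophantine approximation lemma: given finitely many nonzero complex numbers
`λ₁, …, λ_k`, there is a positive integer `N` with `Re(λ_j ^ N) > 0` for all `j`. -/
theorem exists_pow_re_pos (k : ℕ) (lam : Fin k → ℂ) (hlam : ∀ j, lam j ≠ 0) :
    ∃ N : ℕ, 0 < N ∧ ∀ j, 0 < (lam j ^ N).re := by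
  -- normalize to the unit circle
  set u : Fin k → ℂ := fun j => lam j / (‖lam j‖ : ℂ) with hu
  have habs : ∀ j, ‖u j‖ = 1 := by
    intro j
    have h0 : ‖lam j‖ ≠ 0 := by
      simpa using hlam j
    simp [hu, map_div₀, h0]
  -- the sequence of powers lies in the closed ball of radius 1
  set v : ℕ → (Fin k → ℂ) := fun n j => u j ^ n with hv
  have hvmem : ∀ n, v n ∈ Metric.closedBall (0 : Fin k → ℂ) 1 := by
    intro n
    rw [Metric.mem_closedBall, dist_zero_right, pi_norm_le_iff_of_nonneg zero_le_one]
    intro j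
    have : ‖u j ^ n‖ = 1 := by rw [norm_pow, habs j, one_pow]
    simp [hv, this]
  obtain ⟨a, -, φ, hφ, hconv⟩ :=
    tendsto_subseq_of_bounded (Metric.isBounded_closedBall
      (x := (0 : Fin k → ℂ)) (r := 1)) hvmem
  have hc : CauchySeq (v ∘ φ) := hconv.cauchySeq
  rw [Metric.cauchySeq_iff] at hc
  obtain ⟨M, hM⟩ := hc (1/2) (by norm_num)
  have hlt : dist (v (φ (M+1))) (v (φ M)) < 1/2 := hM (M+1) (by omega) M le_rfl
  have hmono : φ M < φ (M+1) := hφ (by omega)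
  refine ⟨φ (M+1) - φ M, by omega, ?_⟩
  intro j
  -- bound the distance coordinatewise
  have hj : dist (u j ^ (φ (M+1))) (u j ^ (φ M)) < 1/2 :=
    lt_of_le_of_lt (dist_le_pi_dist (v (φ (M+1))) (v (φ M)) j) hlt
  set N := φ (M+1) - φ M with hN
  have hsplit : u j ^ (φ (M+1)) = u j ^ (φ M) * u j ^ N := by
    rw [← pow_add]; congr 1; omega
  have hdist1 : ‖u j ^ N - 1‖ < 1/2 := by
    have := hj
    rw [Complex.dist_eq, hsplit] at this
    have heq : u j ^ (φ M) * u j ^ N - u j ^ (φ M) = u j ^ (φ M) * (u j ^ N - 1) := by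
      ring
    rw [heq, norm_mul, norm_pow, habs j, one_pow, one_mul] at this
    exact this
  have hre : 0 < (u j ^ N).re := by
    have h1 : |(u j ^ N - 1).re| ≤ ‖u j ^ N - 1‖ := Complex.abs_re_le_norm _
    have h2 : |(u j ^ N).re - 1| < 1/2 := by
      have : (u j ^ N - 1).re = (u j ^ N).re - 1 := by
        simp [Complex.sub_re]
      rw [← this]
      exact lt_of_le_of_lt h1 hdist1
    rw [abs_lt] at h2
    linarith [h2.1]
  -- relate lam to u
  have hc0 : (‖lam j‖ : ℂ) ≠ 0 := by
    simpa using hlam j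
  have hlamj : lam j = (‖lam j‖ : ℂ) * u j := by
    rw [hu]
    rw [mul_div_assoc', mul_div_cancel_left₀ _ hc0]
  have hpos : 0 < (‖lam j‖) ^ N :=
    pow_pos (norm_pos_iff.mpr (hlam j)) N
  rw [hlamj, mul_pow, ← Complex.ofReal_pow, Complex.re_ofReal_mul]
  exact mul_pos hpos hre
end

section
/- Let d > 0 and c be real numbers and let λ₁, …, λ_k (with k ≥ 1) be nonzero complex numbers. If c·d^n + ∑_{j=1}^k Re(λ_j^n) ≤ 0 for every integer n ≥ 1, then c < 0. -/
/-- Recurrence on the torus: powers of unimodular complex numbers return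
simultaneously near `1`. -/
lemma recur_pow_near_one (k : ℕ) (u : Fin k → ℂ) (hu : ∀ j, ‖u j‖ = 1)
    {ε : ℝ} (hε : 0 < ε) :
    ∃ n : ℕ, 1 ≤ n ∧ ∀ j, ‖u j ^ n - 1‖ < ε := by
  set f : ℕ → (Fin k → ℂ) := fun n j => u j ^ n with hf
  have hball : ∀ n, f n ∈ Metric.closedBall (0 : Fin k → ℂ) 1 := by
    intro n
    rw [Metric.mem_closedBall, dist_zero_right]
    refine pi_norm_le_iff_of_nonneg zero_le_one |>.2 fun j => ?_
    simp [hf, norm_pow, hu j]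
  have htb := (isCompact_closedBall (0 : Fin k → ℂ) 1).totallyBounded
  rw [Metric.totallyBounded_iff] at htb
  obtain ⟨t, htfin, hcover⟩ := htb (ε / 2) (by positivity)
  have hmem : ∀ n, ∃ y ∈ t, f n ∈ Metric.ball y (ε / 2) := by
    intro n
    have := hcover (hball n)
    simpa using this
  choose g hg hgball using hmem
  haveI : Finite t := htfin.to_subtype
  obtain ⟨a, b, hab, heq⟩ :=
    Finite.exists_ne_map_eq_of_infinite (fun n => (⟨g n, hg n⟩ : t))
  -- wlog a < b
  have key : ∀ a b : ℕ, a < b → g a = g b → ∀ j, ‖u j ^ (b - a) - 1‖ < ε := by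
    intro a b hlt hgeq j
    have hd1 : dist (f b) (f a) < ε := by
      calc dist (f b) (f a) ≤ dist (f b) (g b) + dist (g b) (f a) := dist_triangle _ _ _
        _ < ε / 2 + ε / 2 := by
            apply add_lt_add
            · exact Metric.mem_ball.1 (hgball b)
            · rw [dist_comm, ← hgeq]; exact Metric.mem_ball.1 (hgball a)
        _ = ε := by ring
    have hdj : dist (f b j) (f a j) < ε := lt_of_le_of_lt (dist_le_pi_dist (f b) (f a) j) hd1
    have hfac : u j ^ b - u j ^ a = u j ^ a * (u j ^ (b - a) - 1) := by
      rw [mul_sub, mul_one, ← pow_add, Nat.add_sub_cancel' (le_of_lt hlt)]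
    have : ‖u j ^ b - u j ^ a‖ = ‖u j ^ (b - a) - 1‖ := by
      rw [hfac, norm_mul, norm_pow, hu j, one_pow, one_mul]
    rw [Complex.dist_eq] at hdj
    simpa [hf, this] using hdj
  have hgab : g a = g b := congrArg Subtype.val heq
  rcases lt_or_gt_of_ne hab with hlt | hlt
  · exact ⟨b - a, by omega, key a b hlt hgab⟩
  · exact ⟨a - b, by omega, key b a hlt hgab.symm⟩

/-- If `c·d^n + ∑_j Re(λ_j^n) ≤ 0` for all `n ≥ 1`, with `d > 0` and the `λ_j`
nonzero complex numbers (`k ≥ 1`), then `c < 0`. -/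
theorem neg_of_le_zero_forall_pow (d c : ℝ) (hd : 0 < d) (k : ℕ) (hk : 1 ≤ k)
    (lam : Fin k → ℂ) (hlam : ∀ j, lam j ≠ 0)
    (h : ∀ n : ℕ, 1 ≤ n → c * d ^ n + ∑ j, (lam j ^ n).re ≤ 0) :
    c < 0 := by
  by_contra hc
  push_neg at hc
  set u : Fin k → ℂ := fun j => lam j / (‖lam j‖ : ℂ) with hu_def
  have habs : ∀ j, ‖u j‖ = 1 := by
    intro j
    have h0 : ‖lam j‖ ≠ 0 := by
      simpa [norm_ne_zero_iff] using hlam j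
    simp [hu_def, norm_div, Complex.norm_real, abs_of_nonneg (norm_nonneg _), h0]
  obtain ⟨n, hn1, hn⟩ := recur_pow_near_one k u habs (ε := 1) one_pos
  have hpos : ∀ j, 0 < (lam j ^ n).re := by
    intro j
    have h0 : (‖lam j‖ : ℝ) ≠ 0 := by
      simpa [norm_ne_zero_iff] using hlam j
    have hC : (‖lam j‖ : ℂ) ≠ 0 := by
      exact_mod_cast Complex.ofReal_ne_zero.2 h0
    have hrepr : lam j ^ n = ((‖lam j‖ : ℂ) ^ n) * (u j ^ n) := by
      rw [hu_def]
      simp only [div_pow]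
      rw [mul_div_cancel₀ _ (pow_ne_zero _ hC)]
    have hre : (lam j ^ n).re = (‖lam j‖) ^ n * (u j ^ n).re := by
      rw [hrepr]
      rw [← Complex.ofReal_pow, Complex.re_ofReal_mul]
    have hure : 0 < (u j ^ n).re := by
      have h1 := hn j
      have h2 : |(u j ^ n).re - 1| ≤ ‖u j ^ n - 1‖ := by
        simpa using Complex.abs_re_le_norm (u j ^ n - 1)
      have := abs_lt.1 (lt_of_le_of_lt h2 h1)
      linarith [this.1]
    rw [hre]
    exact mul_pos (pow_pos (norm_pos_iff.2 (hlam j)) n) hure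
  have hsum : 0 < ∑ j, (lam j ^ n).re := by
    apply Finset.sum_pos (fun j _ => hpos j)
    exact Finset.univ_nonempty_iff.2 (Fin.pos_iff_nonempty.1 (by omega))
  have hcd : 0 ≤ c * d ^ n := mul_nonneg hc (le_of_lt (pow_pos hd n))
  linarith [h n hn1]
end

section
/- Let d > 0 be a real number, k an integer, and λ₁, …, λ_t nonzero complex numbers. If ∑_{j=1}^t Re(λ_j^n) ≤ (2 − k)·d^n − 1 for every integer n ≥ 1, then k ≤ 1. -/
/-- Recurrence on the torus: for unit complex numbers `u j`, there is `n ≥ 1`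
with every `u j ^ n` within distance `1` of `1`, hence nonnegative real part. -/
lemma exists_pow_re_nonneg (t : ℕ) (u : Fin t → ℂ) (hu : ∀ j, ‖u j‖ = 1) :
    ∃ n : ℕ, 1 ≤ n ∧ ∀ j, 0 ≤ (u j ^ n).re := by
  set F : ℕ → (Fin t → ℂ) := fun n j => u j ^ n with hF
  have hFnorm : ∀ n, F n ∈ Metric.closedBall (0 : Fin t → ℂ) 1 := by
    intro n
    rw [Metric.mem_closedBall, dist_zero_right]
    refine pi_norm_le_iff_of_nonneg zero_le_one |>.mpr fun j => ?_
    simp [hF, norm_pow, hu j]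
  have hcompact : IsCompact (Metric.closedBall (0 : Fin t → ℂ) 1) :=
    isCompact_closedBall _ _
  have htb := hcompact.totallyBounded
  obtain ⟨s, hsfin, hscov⟩ := (Metric.totallyBounded_iff.mp htb) (1/2) (by norm_num)
  -- choose a center for each n
  have hchoice : ∀ n : ℕ, ∃ c ∈ s, F n ∈ Metric.ball c (1/2) := by
    intro n
    have := hscov (hFnorm n)
    simpa using this
  choose c hcs hcball using hchoice
  haveI : Finite s := hsfin.to_subtype
  have : ∃ m n : ℕ, m ≠ n ∧ (⟨c m, hcs m⟩ : s) = ⟨c n, hcs n⟩ :=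
    Finite.exists_ne_map_eq_of_infinite (fun n : ℕ => (⟨c n, hcs n⟩ : s))
  obtain ⟨m, n, hmn, hceq⟩ := this
  -- WLOG m < n
  wlog hlt : m < n generalizing m n
  · exact this n m hmn.symm hceq.symm (by omega)
  have hcc : c m = c n := by simpa using congrArg Subtype.val hceq
  have hdist : dist (F m) (F n) < 1 := by
    calc dist (F m) (F n) ≤ dist (F m) (c m) + dist (c m) (F n) := dist_triangle _ _ _
      _ < 1/2 + 1/2 := by
          refine add_lt_add (Metric.mem_ball.mp (hcball m)) ?_
          rw [hcc, dist_comm]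
          exact Metric.mem_ball.mp (hcball n)
      _ = 1 := by norm_num
  refine ⟨n - m, by omega, fun j => ?_⟩
  have hdj : dist (u j ^ m) (u j ^ n) < 1 :=
    lt_of_le_of_lt (dist_le_pi_dist (F m) (F n) j) hdist
  have hpow : u j ^ n = u j ^ m * u j ^ (n - m) := by
    rw [← pow_add]; congr 1; omega
  have hnorm1 : ‖u j ^ (n - m) - 1‖ < 1 := by
    have : u j ^ m * (u j ^ (n - m) - 1) = u j ^ n - u j ^ m := by
      rw [hpow]; ring
    have h2 : ‖u j ^ m * (u j ^ (n - m) - 1)‖ = ‖u j ^ (n - m) - 1‖ := by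
      rw [norm_mul, norm_pow, hu j, one_pow, one_mul]
    rw [← h2, this]
    rw [dist_eq_norm] at hdj
    rwa [← norm_neg, neg_sub]
  have hre : |(u j ^ (n - m) - 1).re| ≤ ‖u j ^ (n - m) - 1‖ :=
    Complex.abs_re_le_norm _
  have : (u j ^ (n - m)).re = 1 + (u j ^ (n - m) - 1).re := by
    simp [Complex.sub_re]
  rw [this]
  have := neg_le_of_abs_le hre
  linarith
/-- If `∑_j Re(λ_j^n) ≤ (2 − k)·d^n − 1` for all `n ≥ 1`, with `d > 0` and the `λ_j`
nonzero complex numbers, then `k ≤ 1`. -/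
theorem le_one_of_forall_pow_bound (d : ℝ) (hd : 0 < d) (k : ℤ) (t : ℕ)
    (lam : Fin t → ℂ) (hlam : ∀ j, lam j ≠ 0)
    (h : ∀ n : ℕ, 1 ≤ n → ∑ j, (lam j ^ n).re ≤ (2 - (k : ℝ)) * d ^ n - 1) :
    k ≤ 1 := by
  by_contra hk
  push_neg at hk
  have hk2 : (2 : ℝ) ≤ (k : ℝ) := by exact_mod_cast hk
  set u : Fin t → ℂ := fun j => lam j / (‖lam j‖ : ℂ) with hu_def
  have hnorm : ∀ j, ‖u j‖ = 1 := by
    intro j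
    have h0 : ‖lam j‖ ≠ 0 := norm_ne_zero_iff.mpr (hlam j)
    simp only [hu_def, norm_div, Complex.norm_real, Real.norm_eq_abs,
      abs_of_nonneg (norm_nonneg _)]
    exact div_self h0
  obtain ⟨n, hn1, hre⟩ := exists_pow_re_nonneg t u hnorm
  have hsum : 0 ≤ ∑ j, (lam j ^ n).re := by
    refine Finset.sum_nonneg fun j _ => ?_
    have h0 : (‖lam j‖ : ℂ) ≠ 0 := by
      exact_mod_cast Complex.ofReal_ne_zero.mpr (norm_ne_zero_iff.mpr (hlam j))
    have hl : lam j = (‖lam j‖ : ℂ) * u j := by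
      rw [hu_def]
      rw [mul_div_assoc', mul_comm, mul_div_assoc, div_self h0, mul_one]
    rw [hl, mul_pow, ← Complex.ofReal_pow, Complex.re_ofReal_mul]
    exact mul_nonneg (pow_nonneg (norm_nonneg _) n) (hre j)
  have hb := h n hn1
  have hrhs : (2 - (k : ℝ)) * d ^ n - 1 ≤ -1 := by
    have : (2 - (k : ℝ)) ≤ 0 := by linarith
    nlinarith [pow_pos hd n]
  linarith
end

section
/- Let k be a field, r, s ≥ 1 and p, q, t ≥ 0 natural numbers, and let X be a p×r matrix over k with rank X = r − 1, Y a q×s matrix over k with rank Y = s − 1, A a t×r matrix and B a t×s matrix over k. Let M be the (p+t+q)×(r+s) block matrix whose first p rows are (X | 0), next t rows are (A | B), and last q rows are (0 | Y). Assume moreover rank M ≤ r + s − 1. Then rank M = r + s − 1 if and only if the stacked matrix [X; A] (X above A) has rank r or the stacked matrix [B; Y] (B above Y) has rank s. -/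
open Submodule Module

section aux
variable {k : Type*} [Field k]

/-- Core criterion: adjoining rows `P` to a subspace of dimension `n-1` gives dimension `n`
iff some row of `P` lies outside. -/
lemma jrm_core {n : ℕ} {m1 : Type*} [Fintype m1] (hn : 1 ≤ n)
    (RQ : Submodule k (Fin n → k)) (hQ : finrank k RQ = n - 1)
    (P : Matrix m1 (Fin n) k) :
    finrank k ↥(RQ ⊔ span k (Set.range P)) = n ↔ ∃ i, P i ∉ RQ := by
  constructor
  · intro h
    by_contra hc
    push_neg at hc
    have hle : span k (Set.range P) ≤ RQ := by
      rw [span_le]; rintro _ ⟨i, rfl⟩; exact hc i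
    rw [sup_eq_left.mpr hle, hQ] at h
    omega
  · rintro ⟨i, hi⟩
    have hlt : RQ < RQ ⊔ span k (Set.range P) :=
      SetLike.lt_iff_le_and_exists.mpr ⟨le_sup_left, P i,
        Submodule.mem_sup_right (subset_span (Set.mem_range_self i)), hi⟩
    have h1 : finrank k RQ < finrank k ↥(RQ ⊔ span k (Set.range P)) :=
      Submodule.finrank_lt_finrank_of_lt hlt
    have h2 : finrank k ↥(RQ ⊔ span k (Set.range P)) ≤ n := by
      have := Submodule.finrank_le (RQ ⊔ span k (Set.range P))
      simpa [Module.finrank_fintype_fun_eq_card] using this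
    omega

lemma jrm_finrank_prod_bot {M N : Type*} [AddCommGroup M] [AddCommGroup N]
    [Module k M] [Module k N] (p : Submodule k M) :
    finrank k ↥(p.prod (⊥ : Submodule k N)) = finrank k p := by
  rw [← Submodule.map_inl]
  exact ((Submodule.equivMapOfInjective _ LinearMap.inl_injective p).finrank_eq).symm

lemma jrm_finrank_bot_prod {M N : Type*} [AddCommGroup M] [AddCommGroup N]
    [Module k M] [Module k N] (q : Submodule k N) :
    finrank k ↥((⊥ : Submodule k M).prod q) = finrank k q := by
  rw [← Submodule.map_inr]
  exact ((Submodule.equivMapOfInjective _ LinearMap.inr_injective q).finrank_eq).symm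

end aux

/-- Jacobian rank criterion (equation `rg_max` of Section 2.3): smoothness of a point
of a correspondence on a product of two smooth curves. -/
theorem jacobian_rank_max (k : Type*) [Field k] (r s p q t : ℕ) (hr : 1 ≤ r) (hs : 1 ≤ s)
    (X : Matrix (Fin p) (Fin r) k) (Y : Matrix (Fin q) (Fin s) k)
    (A : Matrix (Fin t) (Fin r) k) (B : Matrix (Fin t) (Fin s) k)
    (hX : X.rank = r - 1) (hY : Y.rank = s - 1)
    (M : Matrix (Fin p ⊕ (Fin t ⊕ Fin q)) (Fin r ⊕ Fin s) k)
    (hM : M = Matrix.fromBlocks X 0 (Matrix.fromRows A 0) (Matrix.fromRows B Y))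
    (hMle : M.rank ≤ r + s - 1) :
    M.rank = r + s - 1 ↔
      (Matrix.fromRows X A).rank = r ∨ (Matrix.fromRows B Y).rank = s := by
  classical
  set RX : Submodule k (Fin r → k) := span k (Set.range X) with hRXdef
  set RY : Submodule k (Fin s → k) := span k (Set.range Y) with hRYdef
  have hRX : finrank k RX = r - 1 := by
    rw [hRXdef, ← hX, Matrix.rank_eq_finrank_span_row]; rfl
  have hRY : finrank k RY = s - 1 := by
    rw [hRYdef, ← hY, Matrix.rank_eq_finrank_span_row]; rfl
  -- criteria for the stacked matrices
  have hXA : (Matrix.fromRows X A).rank = r ↔ ∃ i, A i ∉ RX := by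
    have hrg : Set.range (Matrix.fromRows X A) = Set.range X ∪ Set.range A := by
      show Set.range (Sum.elim X A) = _
      exact Set.Sum.elim_range X A
    rw [Matrix.rank_eq_finrank_span_row, show (X.fromRows A).row = X.fromRows A from rfl, hrg, span_union]
    exact jrm_core hr RX hRX A
  have hBY : (Matrix.fromRows B Y).rank = s ↔ ∃ i, B i ∉ RY := by
    have hrg : Set.range (Matrix.fromRows B Y) = Set.range B ∪ Set.range Y := by
      show Set.range (Sum.elim B Y) = _
      exact Set.Sum.elim_range B Y
    rw [Matrix.rank_eq_finrank_span_row, show (B.fromRows Y).row = B.fromRows Y from rfl, hrg, span_union, sup_comm]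
    exact jrm_core hs RY hRY B
  -- pass to the product space
  set e : ((Fin r ⊕ Fin s) → k) ≃ₗ[k] (Fin r → k) × (Fin s → k) :=
    LinearEquiv.sumArrowLequivProdArrow (Fin r) (Fin s) k k with hedef
  set g : (Fin p ⊕ (Fin t ⊕ Fin q)) → (Fin r → k) × (Fin s → k) := fun i => e (M i) with hgdef
  have hrankM : M.rank = finrank k (span k (Set.range g)) := by
    rw [Matrix.rank_eq_finrank_span_row]
    have hmap : span k (Set.range g) =
        Submodule.map (e : ((Fin r ⊕ Fin s) → k) →ₗ[k] _) (span k (Set.range M)) := by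
      rw [Submodule.map_span]
      congr 1
      rw [hgdef]
      exact Set.range_comp (⇑(e : ((Fin r ⊕ Fin s) → k) →ₗ[k] (Fin r → k) × (Fin s → k))) M
    rw [hmap, LinearEquiv.finrank_map_eq]
    rfl
  have hg : g = Sum.elim (fun i => (X i, (0 : Fin s → k)))
      (Sum.elim (fun i => (A i, B i)) (fun j => ((0 : Fin r → k), Y j))) := by
    funext i
    rcases i with i | i | i <;>
      refine Prod.ext (funext fun a => ?_) (funext fun b => ?_) <;>
      simp [hgdef, hedef, hM, Matrix.fromBlocks, Matrix.fromRows] <;> rfl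
  set U : Submodule k ((Fin r → k) × (Fin s → k)) := RX.prod RY with hUdef
  set spanMid : Submodule k ((Fin r → k) × (Fin s → k)) :=
    span k (Set.range fun i => (A i, B i)) with hMiddef
  have hW : span k (Set.range g) = U ⊔ spanMid := by
    rw [hg, Set.Sum.elim_range, Set.Sum.elim_range]
    rw [span_union, span_union]
    have h1 : span k (Set.range fun i => (X i, (0 : Fin s → k))) =
        RX.prod (⊥ : Submodule k (Fin s → k)) := by
      have h := Submodule.map_span (LinearMap.inl k (Fin r → k) (Fin s → k)) (Set.range X)
      rw [Submodule.map_inl] at h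
      rw [hRXdef, h]
      congr 1
      exact Set.range_comp (LinearMap.inl k (Fin r → k) (Fin s → k)) X
    have h3 : span k (Set.range fun j => ((0 : Fin r → k), Y j)) =
        (⊥ : Submodule k (Fin r → k)).prod RY := by
      have h := Submodule.map_span (LinearMap.inr k (Fin r → k) (Fin s → k)) (Set.range Y)
      rw [Submodule.map_inr] at h
      rw [hRYdef, h]
      congr 1
      exact Set.range_comp (LinearMap.inr k (Fin r → k) (Fin s → k)) Y
    rw [h1, h3, hUdef]
    have : RX.prod (⊥ : Submodule k (Fin s → k)) ⊔
        (spanMid ⊔ (⊥ : Submodule k (Fin r → k)).prod RY) =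
        (RX.prod (⊥ : Submodule k (Fin s → k)) ⊔
          (⊥ : Submodule k (Fin r → k)).prod RY) ⊔ spanMid := by
      rw [sup_comm spanMid, ← sup_assoc]
    rw [this, Submodule.prod_sup_prod, sup_bot_eq, bot_sup_eq]
  have hU : finrank k U = (r - 1) + (s - 1) := by
    have hsup : U = RX.prod (⊥ : Submodule k (Fin s → k)) ⊔
        (⊥ : Submodule k (Fin r → k)).prod RY := by
      rw [Submodule.prod_sup_prod, sup_bot_eq, bot_sup_eq]
    have hinf : RX.prod (⊥ : Submodule k (Fin s → k)) ⊓
        (⊥ : Submodule k (Fin r → k)).prod RY = ⊥ := by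
      rw [Submodule.prod_inf_prod, inf_bot_eq, bot_inf_eq]
      ext x
      simp [Submodule.mem_prod, Prod.ext_iff]
    have := Submodule.finrank_sup_add_finrank_inf_eq
      (RX.prod (⊥ : Submodule k (Fin s → k))) ((⊥ : Submodule k (Fin r → k)).prod RY)
    rw [hinf, jrm_finrank_prod_bot, jrm_finrank_bot_prod, finrank_bot] at this
    rw [hsup]
    omega
  rw [hrankM, hW] at hMle ⊢
  constructor
  · intro hrk
    by_contra hcon
    push_neg at hcon
    obtain ⟨h1, h2⟩ := hcon
    replace h1 : ∀ i, A i ∈ RX := by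
      by_contra hc; push_neg at hc; exact h1 (hXA.mpr hc)
    replace h2 : ∀ i, B i ∈ RY := by
      by_contra hc; push_neg at hc; exact h2 (hBY.mpr hc)
    have hle : spanMid ≤ U := by
      rw [hMiddef, span_le]
      rintro _ ⟨i, rfl⟩
      exact Submodule.mem_prod.mpr ⟨h1 i, h2 i⟩
    rw [sup_eq_left.mpr hle, hU] at hrk
    omega
  · intro h
    have hex : ∃ i, (A i, B i) ∉ U := by
      rcases h with h | h
      · obtain ⟨i, hi⟩ := hXA.mp h
        exact ⟨i, fun hmem => hi (Submodule.mem_prod.mp hmem).1⟩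
      · obtain ⟨i, hi⟩ := hBY.mp h
        exact ⟨i, fun hmem => hi (Submodule.mem_prod.mp hmem).2⟩
    obtain ⟨i, hi⟩ := hex
    have hlt : U < U ⊔ spanMid :=
      SetLike.lt_iff_le_and_exists.mpr ⟨le_sup_left, (A i, B i),
        Submodule.mem_sup_right (subset_span (Set.mem_range_self i)), hi⟩
    have := Submodule.finrank_lt_finrank_of_lt hlt
    rw [hU] at this
    omega
end

section
/- Let S be a finite type, d > 0 a real number, and A a square matrix over ℝ indexed by S with nonnegative entries, such that every row sum ∑_{Q∈S} A P Q is at most d and every column sum ∑_{P∈S} A P Q is at most d. Suppose u : S → ℝ is nonnegative, not identically zero, and satisfies ∑_{Q∈S} A P Q · u Q = d · u P for every P ∈ S. Let Σ = {P ∈ S | u P > 0}. Then Σ is nonempty and: (a) for every P ∈ Σ, ∑_{Q∈Σ} A P Q = d; (b) for every Q ∈ Σ, ∑_{P∈Σ} A P Q = d; (c) A P Q = 0 whenever exactly one of P, Q belongs to Σ. -/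
/-- Key matrix-theoretic step in the proof of Proposition 4.5: the support `Σ` of a
nonnegative eigenvector for the eigenvalue `d` of a nonnegative matrix with row and
column sums at most `d` carries a `d`-regular complete subgraph. -/
theorem support_of_nonneg_eigenvector (S : Type*) [Fintype S] (d : ℝ) (hd : 0 < d)
    (A : Matrix S S ℝ) (hA : ∀ P Q, 0 ≤ A P Q)
    (hrow : ∀ P, ∑ Q, A P Q ≤ d) (hcol : ∀ Q, ∑ P, A P Q ≤ d)
    (u : S → ℝ) (hu0 : ∀ P, 0 ≤ u P) (hune : u ≠ 0)
    (heig : ∀ P, ∑ Q, A P Q * u Q = d * u P)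
    (Sig : Finset S) (hSig : Sig = Finset.univ.filter fun P => 0 < u P) :
    Sig.Nonempty ∧
    (∀ P ∈ Sig, ∑ Q ∈ Sig, A P Q = d) ∧
    (∀ Q ∈ Sig, ∑ P ∈ Sig, A P Q = d) ∧
    (∀ P Q, Xor' (P ∈ Sig) (Q ∈ Sig) → A P Q = 0) := by
  classical
  have hmem : ∀ P, P ∈ Sig ↔ 0 < u P := by simp [hSig]
  have uzero : ∀ P, P ∉ Sig → u P = 0 := by
    intro P hP
    rcases lt_or_eq_of_le (hu0 P) with h | h
    · exact absurd ((hmem P).mpr h) hP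
    · exact h.symm
  have hne : Sig.Nonempty := by
    by_contra h
    apply hune
    funext P
    exact uzero P (by simp [Finset.not_nonempty_iff_eq_empty.mp h])
  -- column sums over Sig are ≤ d
  have hcolle : ∀ Q, ∑ P ∈ Sig, A P Q ≤ d := by
    intro Q
    refine le_trans ?_ (hcol Q)
    exact Finset.sum_le_sum_of_subset_of_nonneg (Finset.subset_univ Sig)
      (fun P _ _ => hA P Q)
  have hrowle : ∀ P, ∑ Q ∈ Sig, A P Q ≤ d := by
    intro P
    refine le_trans ?_ (hrow P)
    exact Finset.sum_le_sum_of_subset_of_nonneg (Finset.subset_univ Sig)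
      (fun Q _ _ => hA P Q)
  -- (b)
  have hb : ∀ Q ∈ Sig, ∑ P ∈ Sig, A P Q = d := by
    have h1 : ∑ P ∈ Sig, d * u P = ∑ Q ∈ Sig, (∑ P ∈ Sig, A P Q) * u Q := by
      calc ∑ P ∈ Sig, d * u P = ∑ P ∈ Sig, ∑ Q, A P Q * u Q := by
            simp [heig]
        _ = ∑ Q, ∑ P ∈ Sig, A P Q * u Q := Finset.sum_comm
        _ = ∑ Q, (∑ P ∈ Sig, A P Q) * u Q := by simp [Finset.sum_mul]
        _ = ∑ Q ∈ Sig, (∑ P ∈ Sig, A P Q) * u Q := by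
            rw [← Finset.sum_subset (Finset.subset_univ Sig)]
            intro Q _ hQ; simp [uzero Q hQ]
    have key : ∑ Q ∈ Sig, (d - ∑ P ∈ Sig, A P Q) * u Q = 0 := by
      simp only [sub_mul, Finset.sum_sub_distrib]
      rw [← h1]
      ring
    have hnn : ∀ Q ∈ Sig, 0 ≤ (d - ∑ P ∈ Sig, A P Q) * u Q := by
      intro Q hQ
      exact mul_nonneg (by linarith [hcolle Q]) ((hmem Q).mp hQ).le
    intro Q hQ
    have h0 := (Finset.sum_eq_zero_iff_of_nonneg hnn).mp key Q hQ
    have hu := (hmem Q).mp hQ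
    rcases mul_eq_zero.mp h0 with h | h
    · linarith
    · linarith
  -- (a)
  have ha : ∀ P ∈ Sig, ∑ Q ∈ Sig, A P Q = d := by
    have key : ∑ P ∈ Sig, (d - ∑ Q ∈ Sig, A P Q) = 0 := by
      have h2 : ∑ P ∈ Sig, ∑ Q ∈ Sig, A P Q = ∑ P ∈ Sig, d := by
        refine Finset.sum_comm.trans ?_
        exact Finset.sum_congr rfl hb
      simp only [Finset.sum_sub_distrib]
      rw [h2]
      ring
    intro P hP
    have h0 := (Finset.sum_eq_zero_iff_of_nonneg
      (fun P _ => by linarith [hrowle P])).mp key P hP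
    linarith
  refine ⟨hne, ha, hb, ?_⟩
  intro P Q hxor
  rcases hxor with ⟨hP, hQ⟩ | ⟨hQ, hP⟩
  · -- P ∈ Sig, Q ∉ Sig : use row
    have hsplit : ∑ Q' ∈ Sig, A P Q' + ∑ Q' ∈ Sigᶜ, A P Q' = ∑ Q', A P Q' :=
      Finset.sum_add_sum_compl Sig _
    have hz : ∑ Q' ∈ Sigᶜ, A P Q' = 0 := by
      have := hrow P
      have h1 := ha P hP
      have hge : 0 ≤ ∑ Q' ∈ Sigᶜ, A P Q' :=
        Finset.sum_nonneg fun Q' _ => hA P Q'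
      linarith
    exact (Finset.sum_eq_zero_iff_of_nonneg (fun Q' _ => hA P Q')).mp hz Q
      (Finset.mem_compl.mpr hQ)
  · -- Q ∈ Sig, P ∉ Sig : use column
    have hsplit : ∑ P' ∈ Sig, A P' Q + ∑ P' ∈ Sigᶜ, A P' Q = ∑ P', A P' Q :=
      Finset.sum_add_sum_compl Sig _
    have hz : ∑ P' ∈ Sigᶜ, A P' Q = 0 := by
      have := hcol Q
      have h1 := hb Q hQ
      have hge : 0 ≤ ∑ P' ∈ Sigᶜ, A P' Q :=
        Finset.sum_nonneg fun P' _ => hA P' Q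
      linarith
    exact (Finset.sum_eq_zero_iff_of_nonneg (fun P' _ => hA P' Q)).mp hz P
      (Finset.mem_compl.mpr hP)
end

section
/- Let S be a nonempty finite type, d > 0 a real number, and A a square matrix over ℝ indexed by S with nonnegative entries, such that every row sum ∑_{Q∈S} A P Q is at most d and every column sum ∑_{P∈S} A P Q is at most d. Then the spectral radius of A equals d if and only if there exists a nonempty subset Σ ⊆ S such that the principal submatrix (A P Q)_{P,Q∈Σ} has all its row sums and all its column sums equal to d. -/
open Finset Matrix Polynomial

section Aux

/-- Every element of a multiset of reals is at most its `foldr max 0`. -/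
lemma le_foldrMax {s : Multiset ℝ} {x : ℝ} (hx : x ∈ s) : x ≤ s.foldr max 0 := by
  induction s using Multiset.induction with
  | empty => simp at hx
  | cons a t ih =>
    rw [Multiset.mem_cons] at hx
    rw [Multiset.foldr_cons]
    rcases hx with rfl | hx
    · exact le_max_left _ _
    · exact le_trans (ih hx) (le_max_right _ _)

lemma foldrMax_le {s : Multiset ℝ} {c : ℝ} (hc : 0 ≤ c) (h : ∀ x ∈ s, x ≤ c) :
    s.foldr max 0 ≤ c := by
  induction s using Multiset.induction with
  | empty => simpa
  | cons a t ih =>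
    rw [Multiset.foldr_cons, max_le_iff]
    exact ⟨h a (Multiset.mem_cons_self a t), ih fun x hx => h x (Multiset.mem_cons_of_mem hx)⟩

lemma foldrMax_mem {s : Multiset ℝ} (h : s.foldr max 0 ≠ 0) : s.foldr max 0 ∈ s := by
  induction s using Multiset.induction with
  | empty => simp at h
  | cons a t ih =>
    rw [Multiset.foldr_cons] at h ⊢
    rcases max_cases a (t.foldr max 0) with ⟨he, _⟩ | ⟨he, _⟩
    · rw [he]; exact Multiset.mem_cons_self a t
    · rw [he] at h ⊢
      exact Multiset.mem_cons_of_mem (ih h)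

/-- A complex number is a root of the characteristic polynomial iff it is an eigenvalue. -/
lemma root_charpoly_iff {S : Type*} [Fintype S] [DecidableEq S] (M : Matrix S S ℂ) (μ : ℂ) :
    μ ∈ M.charpoly.roots ↔ ∃ v, v ≠ 0 ∧ M.mulVec v = μ • v := by
  rw [Polynomial.mem_roots (M.charpoly_monic.ne_zero)]
  have heval : M.charpoly.eval μ = (μ • (1 : Matrix S S ℂ) - M).det := by
    rw [Matrix.charpoly, ← Polynomial.coe_evalRingHom, RingHom.map_det]
    congr 1
    ext i j
    by_cases h : i = j
    · subst h
      simp [charmatrix_apply_eq, Matrix.one_apply, Matrix.smul_apply]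
    · simp [charmatrix_apply_ne _ _ _ h, Matrix.one_apply_ne h, Matrix.smul_apply]
  constructor
  · intro hr
    have hr' : (μ • (1 : Matrix S S ℂ) - M).det = 0 := by rw [← heval]; exact hr
    obtain ⟨v, hv0, hv⟩ := (Matrix.exists_mulVec_eq_zero_iff).mpr hr'
    refine ⟨v, hv0, ?_⟩
    have := hv
    rw [Matrix.sub_mulVec, sub_eq_zero] at this
    rw [← this, Matrix.smul_mulVec, Matrix.one_mulVec]
  · rintro ⟨v, hv0, hv⟩
    show M.charpoly.eval μ = 0
    rw [heval, ← Matrix.exists_mulVec_eq_zero_iff]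
    refine ⟨v, hv0, ?_⟩
    rw [Matrix.sub_mulVec, sub_eq_zero, hv, Matrix.smul_mulVec, Matrix.one_mulVec]

end Aux

section Key

variable {S : Type*} [Fintype S] [DecidableEq S]

/-- Main eigenvector analysis: any eigenvalue has modulus at most `d`, and if the modulus
equals `d` then there is a nonempty subset on which all row sums of `A` equal `d`. -/
lemma eigen_analysis (d : ℝ) (hd : 0 < d) (A : Matrix S S ℝ) (hA : ∀ P Q, 0 ≤ A P Q)
    (hrow : ∀ P, ∑ Q, A P Q ≤ d) (μ : ℂ) (v : S → ℂ) (hv0 : v ≠ 0)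
    (heig : (A.map (Complex.ofReal)).mulVec v = μ • v) :
    ‖μ‖ ≤ d ∧
      (‖μ‖ = d → ∃ Sig : Finset S, Sig.Nonempty ∧
        ∀ P ∈ Sig, ∑ Q ∈ Sig, A P Q = d) := by
  classical
  have hne : (Finset.univ : Finset S).Nonempty := by
    obtain ⟨P, hP⟩ := Function.ne_iff.mp hv0
    exact ⟨P, Finset.mem_univ P⟩
  obtain ⟨P0, -, hP0⟩ := Finset.exists_max_image Finset.univ (fun P => ‖v P‖) hne
  set m : ℝ := ‖v P0‖ with hm
  have hmax : ∀ P, ‖v P‖ ≤ m := fun P => hP0 P (Finset.mem_univ P)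
  have hm0 : 0 < m := by
    obtain ⟨P, hP⟩ := Function.ne_iff.mp hv0
    calc (0 : ℝ) < ‖v P‖ := norm_pos_iff.mpr hP
    _ ≤ m := hmax P
  -- the eigen equation entrywise
  have hentry : ∀ P, μ * v P = ∑ Q, (A P Q : ℂ) * v Q := by
    intro P
    have := congrFun heig P
    simp only [Matrix.mulVec, dotProduct, Matrix.map_apply, Pi.smul_apply,
      smul_eq_mul] at this
    rw [← this]
  -- the basic chain of inequalities at each P
  have hchain1 : ∀ P, ‖μ‖ * ‖v P‖ ≤ ∑ Q, A P Q * ‖v Q‖ := by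
    intro P
    calc ‖μ‖ * ‖v P‖ = ‖μ * v P‖ := (norm_mul _ _).symm
    _ = ‖∑ Q, (A P Q : ℂ) * v Q‖ := by rw [hentry P]
    _ ≤ ∑ Q, ‖(A P Q : ℂ) * v Q‖ := norm_sum_le _ _
    _ = ∑ Q, A P Q * ‖v Q‖ := by
        refine Finset.sum_congr rfl fun Q _ => ?_
        rw [norm_mul, Complex.norm_real, Real.norm_eq_abs, abs_of_nonneg (hA P Q)]
  have hchain2 : ∀ P, ∑ Q, A P Q * ‖v Q‖ ≤ d * m := by
    intro P
    calc ∑ Q, A P Q * ‖v Q‖ ≤ ∑ Q, A P Q * m :=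
      Finset.sum_le_sum fun Q _ => mul_le_mul_of_nonneg_left (hmax Q) (hA P Q)
    _ = (∑ Q, A P Q) * m := by rw [Finset.sum_mul]
    _ ≤ d * m := mul_le_mul_of_nonneg_right (hrow P) hm0.le
  have habs : ‖μ‖ ≤ d := by
    have := le_trans (hchain1 P0) (hchain2 P0)
    rw [← hm] at this
    exact le_of_mul_le_mul_right (by linarith [this]) hm0
  refine ⟨habs, fun hd' => ?_⟩
  -- equality case
  set Sig : Finset S := Finset.univ.filter (fun P => ‖v P‖ = m) with hSig
  have hP0mem : P0 ∈ Sig := by simp [hSig, hm]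
  refine ⟨Sig, ⟨P0, hP0mem⟩, fun P hP => ?_⟩
  have hvP : ‖v P‖ = m := (Finset.mem_filter.mp hP).2
  -- at P, all inequalities are equalities
  have e1 : ∑ Q, A P Q * ‖v Q‖ = d * m := by
    have h1 := hchain1 P
    rw [hvP, hd'] at h1
    exact le_antisymm (hchain2 P) h1
  have e2 : (∑ Q, A P Q) * m = d * m := by
    have hge : d * m ≤ (∑ Q, A P Q) * m := by
      calc d * m = ∑ Q, A P Q * ‖v Q‖ := e1.symm
      _ ≤ ∑ Q, A P Q * m :=
        Finset.sum_le_sum fun Q _ => mul_le_mul_of_nonneg_left (hmax Q) (hA P Q)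
      _ = (∑ Q, A P Q) * m := by rw [Finset.sum_mul]
    exact le_antisymm (mul_le_mul_of_nonneg_right (hrow P) hm0.le) hge
  have hrowP : ∑ Q, A P Q = d := mul_right_cancel₀ hm0.ne' e2
  -- each term A P Q * (m - |v Q|) is zero
  have hzero : ∀ Q, Q ∉ Sig → A P Q = 0 := by
    intro Q hQ
    have hsum0 : ∑ Q, A P Q * (m - ‖v Q‖) = 0 := by
      have : ∑ Q, A P Q * (m - ‖v Q‖)
          = (∑ Q, A P Q) * m - ∑ Q, A P Q * ‖v Q‖ := by
        rw [Finset.sum_mul, ← Finset.sum_sub_distrib]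
        exact Finset.sum_congr rfl fun Q _ => by ring
      rw [this, hrowP, e1, sub_self]
    have hterm := (Finset.sum_eq_zero_iff_of_nonneg
      (fun Q _ => mul_nonneg (hA P Q) (sub_nonneg.mpr (hmax Q)))).mp hsum0 Q (Finset.mem_univ Q)
    have hQm : ‖v Q‖ ≠ m := by
      intro h; exact hQ (by simp [hSig, h])
    have : m - ‖v Q‖ ≠ 0 := sub_ne_zero.mpr (Ne.symm hQm)
    exact (mul_eq_zero.mp hterm).resolve_right this
  calc ∑ Q ∈ Sig, A P Q = ∑ Q, A P Q :=
    Finset.sum_subset (Finset.subset_univ Sig) (fun Q _ hQ => hzero Q hQ)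
  _ = d := hrowP

/-- Counting argument: equal row sums on a subset force equal column sums. -/
lemma cols_of_rows (d : ℝ) (A : Matrix S S ℝ) (hA : ∀ P Q, 0 ≤ A P Q)
    (hcol : ∀ Q, ∑ P, A P Q ≤ d) (Sig : Finset S)
    (hr : ∀ P ∈ Sig, ∑ Q ∈ Sig, A P Q = d) :
    ∀ Q ∈ Sig, ∑ P ∈ Sig, A P Q = d := by
  have hle : ∀ Q ∈ Sig, ∑ P ∈ Sig, A P Q ≤ d := fun Q _ =>
    le_trans (Finset.sum_le_sum_of_subset_of_nonneg (Finset.subset_univ Sig)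
      (fun P _ _ => hA P Q)) (hcol Q)
  have htot : ∑ Q ∈ Sig, ∑ P ∈ Sig, A P Q = ∑ Q ∈ Sig, d := by
    rw [Finset.sum_comm, Finset.sum_congr rfl hr]
  exact (Finset.sum_eq_sum_iff_of_le hle).mp htot

end Key

/-- The spectral radius of a real square matrix: the maximum of the moduli of the
complex roots of its characteristic polynomial (`0` if there are none). -/
noncomputable def specRad {S : Type*} [Fintype S] [DecidableEq S]
    (A : Matrix S S ℝ) : ℝ :=
  (((A.map (Complex.ofReal)).charpoly.roots).map (fun z : ℂ => ‖z‖)).foldr max 0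

/-- Matrix-theoretic content of the equivalence (1) ⟺ (2) of Proposition 4.5. -/
theorem specRad_eq_iff_exists_regular_subset (S : Type*) [Fintype S] [DecidableEq S]
    [Nonempty S] (d : ℝ) (hd : 0 < d) (A : Matrix S S ℝ) (hA : ∀ P Q, 0 ≤ A P Q)
    (hrow : ∀ P, ∑ Q, A P Q ≤ d) (hcol : ∀ Q, ∑ P, A P Q ≤ d) :
    specRad A = d ↔
      ∃ Sig : Finset S, Sig.Nonempty ∧
        (∀ P ∈ Sig, ∑ Q ∈ Sig, A P Q = d) ∧
        (∀ Q ∈ Sig, ∑ P ∈ Sig, A P Q = d) := by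
  classical
  have hbound : ∀ x ∈ ((A.map (Complex.ofReal)).charpoly.roots).map (fun z : ℂ => ‖z‖), x ≤ d := by
    intro x hx
    obtain ⟨μ, hμ, rfl⟩ := Multiset.mem_map.mp hx
    obtain ⟨v, hv0, hv⟩ := (root_charpoly_iff _ μ).mp hμ
    exact (eigen_analysis d hd A hA hrow μ v hv0 hv).1
  constructor
  · intro hspec
    have hne : specRad A ≠ 0 := by rw [hspec]; exact hd.ne'
    simp only [specRad] at hspec
    have hmem := foldrMax_mem hne
    rw [hspec] at hmem
    obtain ⟨μ, hμ, hμd⟩ := Multiset.mem_map.mp hmem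
    obtain ⟨v, hv0, hv⟩ := (root_charpoly_iff _ μ).mp hμ
    obtain ⟨Sig, hSne, hSrows⟩ := (eigen_analysis d hd A hA hrow μ v hv0 hv).2 hμd
    exact ⟨Sig, hSne, hSrows, cols_of_rows d A hA hcol Sig hSrows⟩
  · rintro ⟨Sig, hSne, hSrows, hScols⟩
    -- entries vanish outside Sig on columns in Sig
    have hzero : ∀ P, P ∉ Sig → ∀ Q ∈ Sig, A P Q = 0 := by
      intro P hP Q hQ
      have hsplit : ∑ P' ∈ Finset.univ \ Sig, A P' Q + ∑ P' ∈ Sig, A P' Q = ∑ P', A P' Q :=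
        Finset.sum_sdiff (Finset.subset_univ Sig)
      have h1 : ∑ P' ∈ Finset.univ \ Sig, A P' Q ≤ 0 := by
        have := hcol Q
        rw [← hsplit, hScols Q hQ] at this
        linarith
      have h2 : ∑ P' ∈ Finset.univ \ Sig, A P' Q = 0 :=
        le_antisymm h1 (Finset.sum_nonneg fun P' _ => hA P' Q)
      exact (Finset.sum_eq_zero_iff_of_nonneg (fun P' _ => hA P' Q)).mp h2 P
        (Finset.mem_sdiff.mpr ⟨Finset.mem_univ P, hP⟩)
    -- the indicator of Sig is an eigenvector with eigenvalue d
    set w : S → ℂ := fun P => if P ∈ Sig then (1 : ℂ) else 0 with hw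
    have hw0 : w ≠ 0 := by
      obtain ⟨P, hP⟩ := hSne
      intro h
      have := congrFun h P
      simp [hw, hP] at this
    have heig : (A.map (Complex.ofReal)).mulVec w = (d : ℂ) • w := by
      funext P
      simp only [Matrix.mulVec, dotProduct, Matrix.map_apply, Pi.smul_apply, smul_eq_mul]
      have : ∀ Q, (A P Q : ℂ) * w Q = if Q ∈ Sig then (A P Q : ℂ) else 0 := by
        intro Q
        by_cases h : Q ∈ Sig <;> simp [hw, h]
      rw [Finset.sum_congr rfl fun Q _ => this Q, Finset.sum_ite_mem,
        Finset.univ_inter]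
      by_cases hP : P ∈ Sig
      · rw [hw]
        simp only [hP, if_true, mul_one]
        rw [← Complex.ofReal_sum, hSrows P hP]
      · rw [hw]
        simp only [hP, if_false, mul_zero]
        rw [Finset.sum_eq_zero fun Q hQ => by rw [hzero P hP Q hQ, Complex.ofReal_zero]]
    have hroot : (d : ℂ) ∈ (A.map (Complex.ofReal)).charpoly.roots :=
      (root_charpoly_iff _ _).mpr ⟨w, hw0, heig⟩
    have hdmem : d ∈ ((A.map (Complex.ofReal)).charpoly.roots).map (fun z : ℂ => ‖z‖) := by
      refine Multiset.mem_map.mpr ⟨(d : ℂ), hroot, ?_⟩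
      rw [Complex.norm_real, Real.norm_eq_abs, abs_of_pos hd]
    exact le_antisymm (foldrMax_le hd.le hbound) (le_foldrMax hdmem)
end

section
/- Let S be a nonempty finite type, A a square matrix over ℝ indexed by S with nonnegative entries, and d > 0, c > 0 real numbers. If (∑_{P,Q∈S} (A^n) P Q)/d^n tends to c as n → ∞, then the spectral radius of A equals d. -/
open Filter Topology Polynomial Matrix
open scoped NNReal

section Aux

variable {S : Type*} [Fintype S] [DecidableEq S]

lemma aux_spec_iff (B : Matrix S S ℂ) (μ : ℂ) :
    μ ∈ spectrum ℂ B ↔ B.charpoly.eval μ = 0 := by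
  rw [spectrum.mem_iff]
  have hdet : (algebraMap ℂ (Matrix S S ℂ) μ - B).det = B.charpoly.eval μ := by
    have : (algebraMap ℂ (Matrix S S ℂ) μ - B) = (charmatrix B).map (evalRingHom μ) := by
      ext i j
      by_cases hij : i = j <;>
        simp [hij, charmatrix_apply, Matrix.algebraMap_matrix_apply, Matrix.diagonal_apply]
    rw [this, ← RingHom.mapMatrix_apply, ← RingHom.map_det, Matrix.charpoly]
    simp
  rw [Matrix.isUnit_iff_isUnit_det, hdet, isUnit_iff_ne_zero, not_not]

lemma aux_foldr_le (m : Multiset ℝ) (d : ℝ) (hd : 0 ≤ d)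
    (hle : ∀ x ∈ m, x ≤ d) : m.foldr max 0 ≤ d := by
  induction m using Multiset.induction with
  | empty => simpa using hd
  | cons a s ih =>
    rw [Multiset.foldr_cons]
    exact max_le (hle a (Multiset.mem_cons_self a s))
      (ih fun x hx => hle x (Multiset.mem_cons_of_mem hx))

lemma aux_le_foldr (m : Multiset ℝ) (x : ℝ) (hx : x ∈ m) : x ≤ m.foldr max 0 := by
  induction m using Multiset.induction with
  | empty => simp at hx
  | cons a s ih =>
    rw [Multiset.foldr_cons]
    rcases Multiset.mem_cons.mp hx with h | h
    · exact h ▸ le_max_left _ _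
    · exact (ih h).trans (le_max_right _ _)

lemma aux_root_tendsto (u : ℕ → ℝ) (d a b : ℝ) (hd : 0 < d) (ha : 0 < a)
    (hlow : ∀ᶠ n in atTop, a * d ^ n ≤ u n) (hhigh : ∀ᶠ n in atTop, u n ≤ b * d ^ n) :
    Tendsto (fun n : ℕ => u n ^ (1 / (n : ℝ))) atTop (𝓝 d) := by
  have hb : 0 < b := by
    obtain ⟨n, h1, h2⟩ := (hlow.and hhigh).exists
    have hp : (0:ℝ) < d ^ n := pow_pos hd n
    nlinarith
  have hupos : ∀ᶠ n in atTop, 0 < u n := by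
    filter_upwards [hlow] with n h1
    exact lt_of_lt_of_le (by positivity) h1
  have hratio : Tendsto (fun n : ℕ => Real.log (u n / d ^ n) / n) atTop (𝓝 0) := by
    apply tendsto_of_tendsto_of_tendsto_of_le_of_le'
      (tendsto_const_div_atTop_nhds_zero_nat (Real.log a))
      (tendsto_const_div_atTop_nhds_zero_nat (Real.log b))
    · filter_upwards [hlow, eventually_gt_atTop 0] with n h1 hn
      have hp : (0:ℝ) < d ^ n := pow_pos hd n
      have : a ≤ u n / d ^ n := (le_div_iff₀ hp).mpr h1
      exact div_le_div_of_nonneg_right (Real.log_le_log ha this) (by positivity)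
    · filter_upwards [hhigh, hupos, eventually_gt_atTop 0] with n h2 hu hn
      have hp : (0:ℝ) < d ^ n := pow_pos hd n
      have h3 : u n / d ^ n ≤ b := (div_le_iff₀ hp).mpr h2
      exact div_le_div_of_nonneg_right (Real.log_le_log (by positivity) h3) (by positivity)
  have hlog : Tendsto (fun n : ℕ => Real.log (u n) / n) atTop (𝓝 (Real.log d)) := by
    have := hratio.add tendsto_const_nhds (b := Real.log d)
    rw [zero_add] at this
    apply this.congr'
    filter_upwards [hupos, eventually_gt_atTop 0] with n hu hn
    have hp : (0:ℝ) < d ^ n := pow_pos hd n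
    rw [Real.log_div (ne_of_gt hu) (ne_of_gt hp), Real.log_pow, sub_div]
    have hn' : (n:ℝ) ≠ 0 := Nat.cast_ne_zero.mpr hn.ne'
    field_simp
    ring
  have hexp := (Real.continuous_exp.tendsto _).comp hlog
  rw [Real.exp_log hd] at hexp
  apply hexp.congr'
  filter_upwards [hupos, eventually_gt_atTop 0] with n hu hn
  rw [Function.comp_apply, Real.rpow_def_of_pos hu]
  rw [div_eq_mul_inv, one_div, mul_comm]

attribute [local instance] Matrix.linftyOpNormedRing Matrix.linftyOpNormedAlgebra

lemma aux_norm_le_sum (N : Matrix S S ℂ) : ‖N‖ ≤ ∑ i, ∑ j, ‖N i j‖ := by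
  rw [Matrix.linfty_opNorm_def]
  calc ((Finset.univ.sup fun i => ∑ j, ‖N i j‖₊ : ℝ≥0) : ℝ)
      ≤ ((∑ i, ∑ j, ‖N i j‖₊ : ℝ≥0) : ℝ) := by
        gcongr
        exact Finset.sup_le fun i _ =>
          Finset.single_le_sum (f := fun i => ∑ j, ‖N i j‖₊) (fun i _ => zero_le)
            (Finset.mem_univ i)
    _ = ∑ i, ∑ j, ‖N i j‖ := by push_cast; rfl

lemma aux_sum_le_norm (N : Matrix S S ℂ) :
    ∑ i, ∑ j, ‖N i j‖ ≤ (Fintype.card S) * ‖N‖ := by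
  rw [Matrix.linfty_opNorm_def]
  have key : (∑ i, ∑ j, ‖N i j‖₊ : ℝ≥0)
      ≤ (Fintype.card S) * (Finset.univ.sup fun i => ∑ j, ‖N i j‖₊) := by
    calc (∑ i, ∑ j, ‖N i j‖₊ : ℝ≥0)
        ≤ ∑ _i : S, (Finset.univ.sup fun i => ∑ j, ‖N i j‖₊) :=
          Finset.sum_le_sum fun i _ =>
            Finset.le_sup (f := fun i => ∑ j, ‖N i j‖₊) (Finset.mem_univ i)
      _ = (Fintype.card S) * (Finset.univ.sup fun i => ∑ j, ‖N i j‖₊) := by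
          rw [Finset.sum_const, Finset.card_univ, nsmul_eq_mul]
  calc ∑ i, ∑ j, ‖N i j‖ = ((∑ i, ∑ j, ‖N i j‖₊ : ℝ≥0) : ℝ) := by push_cast; rfl
    _ ≤ (Fintype.card S) * ((Finset.univ.sup fun i => ∑ j, ‖N i j‖₊ : ℝ≥0) : ℝ) := by
        exact_mod_cast key

end Aux

/-- Implication (3) ⟹ (1) of Proposition 4.5: if the sum of the entries of `A ^ n`
grows like `c · d ^ n` with `c > 0`, then the spectral radius of the nonnegative
matrix `A` equals `d`. -/
theorem specRad_eq_of_entries_growth (S : Type*) [Fintype S] [DecidableEq S]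
    [Nonempty S] (A : Matrix S S ℝ) (hA : ∀ P Q, 0 ≤ A P Q)
    (d c : ℝ) (hd : 0 < d) (hc : 0 < c)
    (h : Tendsto (fun n : ℕ => (∑ P, ∑ Q, (A ^ n) P Q) / d ^ n) atTop (nhds c)) :
    specRad A = d := by
  classical
  letI : NormedRing (Matrix S S ℂ) := Matrix.linftyOpNormedRing
  letI : NormedAlgebra ℂ (Matrix S S ℂ) := Matrix.linftyOpNormedAlgebra
  haveI : CompleteSpace (Matrix S S ℂ) := FiniteDimensional.complete ℂ _
  set B : Matrix S S ℂ := A.map Complex.ofReal with hB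
  -- entries of A ^ n are nonnegative
  have hpow : ∀ n : ℕ, ∀ P Q, 0 ≤ (A ^ n) P Q := by
    intro n
    induction n with
    | zero => intro P Q; by_cases hPQ : P = Q <;>
        simp [pow_zero, Matrix.one_apply, hPQ]
    | succ n ih =>
      intro P Q
      rw [pow_succ, Matrix.mul_apply]
      exact Finset.sum_nonneg fun k _ => mul_nonneg (ih P k) (hA k Q)
  -- B ^ n = (A ^ n).map ofReal
  have hBpow : ∀ n : ℕ, B ^ n = (A ^ n).map Complex.ofReal := by
    intro n
    induction n with
    | zero =>
      simp only [pow_zero]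
      ext i j
      by_cases hij : i = j <;> simp [Matrix.one_apply, hij]
    | succ n ih =>
      rw [pow_succ, pow_succ, ih, hB]
      ext i j
      simp [Matrix.mul_apply, Matrix.map_apply]
  set s : ℕ → ℝ := fun n => ∑ P, ∑ Q, (A ^ n) P Q with hs
  -- the sum of entry norms of B ^ n is s n
  have hsum : ∀ n : ℕ, ∑ i, ∑ j, ‖(B ^ n) i j‖ = s n := by
    intro n
    rw [hBpow n]
    simp only [Matrix.map_apply, Complex.norm_real]
    refine Finset.sum_congr rfl fun i _ => Finset.sum_congr rfl fun j _ => ?_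
    exact abs_of_nonneg (hpow n i j)
  -- eventual bounds on s
  have hcard : (0:ℝ) < Fintype.card S := by
    exact_mod_cast Fintype.card_pos
  have hev : ∀ᶠ n in atTop, (c/2) * d ^ n ≤ s n ∧ s n ≤ (2*c) * d ^ n := by
    have h1 : ∀ᶠ n in atTop, c/2 < s n / d ^ n := h.eventually_const_lt (by linarith)
    have h2 : ∀ᶠ n in atTop, s n / d ^ n < 2*c := h.eventually_lt_const (by linarith)
    filter_upwards [h1, h2] with n hn1 hn2
    have hp : (0:ℝ) < d ^ n := pow_pos hd n
    constructor
    · exact le_of_lt ((lt_div_iff₀ hp).mp hn1)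
    · exact le_of_lt ((div_lt_iff₀ hp).mp hn2)
  -- norm bounds
  have hlow : ∀ᶠ n in atTop, (c/(2 * Fintype.card S)) * d ^ n ≤ ‖B ^ n‖ := by
    filter_upwards [hev] with n hn
    have h3 : s n ≤ (Fintype.card S) * ‖B ^ n‖ := by
      rw [← hsum n]; exact aux_sum_le_norm _
    have h4 : (c/2) * d ^ n ≤ (Fintype.card S) * ‖B ^ n‖ := hn.1.trans h3
    rw [div_mul_eq_mul_div, div_le_iff₀ (by positivity)]
    nlinarith
  have hhigh : ∀ᶠ n in atTop, ‖B ^ n‖ ≤ (2*c) * d ^ n := by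
    filter_upwards [hev] with n hn
    have h3 : ‖B ^ n‖ ≤ s n := by
      rw [← hsum n]; exact aux_norm_le_sum _
    exact h3.trans hn.2
  -- Gelfand's formula gives the spectral radius
  have hroot : Tendsto (fun n : ℕ => ‖B ^ n‖ ^ (1 / (n:ℝ))) atTop (𝓝 d) :=
    aux_root_tendsto _ d _ _ hd (by positivity) hlow hhigh
  have hgel := spectrum.pow_norm_pow_one_div_tendsto_nhds_spectralRadius B
  have hofReal : Tendsto (fun n : ℕ => ENNReal.ofReal (‖B ^ n‖ ^ (1 / (n:ℝ)))) atTop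
      (𝓝 (ENNReal.ofReal d)) := (ENNReal.continuous_ofReal.tendsto _).comp hroot
  have hsr : spectralRadius ℂ B = ENNReal.ofReal d := tendsto_nhds_unique hgel hofReal
  -- translate to statements about charpoly roots
  haveI : Nontrivial (Matrix S S ℂ) := inferInstance
  have hne : B.charpoly ≠ 0 := B.charpoly_monic.ne_zero
  have hub : ∀ μ ∈ B.charpoly.roots, ‖μ‖ ≤ d := by
    intro μ hμ
    have hμs : μ ∈ spectrum ℂ B := (aux_spec_iff B μ).mpr (Polynomial.isRoot_of_mem_roots hμ)
    have : (‖μ‖₊ : ENNReal) ≤ spectralRadius ℂ B :=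
      le_iSup₂ (f := fun k (_ : k ∈ spectrum ℂ B) => (‖k‖₊ : ENNReal)) μ hμs
    rw [hsr, ← enorm_eq_nnnorm, ← ofReal_norm] at this
    have := (ENNReal.ofReal_le_ofReal_iff hd.le).mp this
    exact this
  have hex : ∃ μ ∈ B.charpoly.roots, ‖μ‖ = d := by
    obtain ⟨μ, hμs, hμn⟩ := spectrum.exists_nnnorm_eq_spectralRadius B
    refine ⟨μ, ?_, ?_⟩
    · rw [Polynomial.mem_roots hne]
      exact (aux_spec_iff B μ).mp hμs
    · rw [hsr, ← enorm_eq_nnnorm, ← ofReal_norm] at hμn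
      have := ENNReal.ofReal_eq_ofReal_iff (norm_nonneg μ) hd.le |>.mp hμn
      exact this
  -- conclude
  obtain ⟨μ, hμr, hμd⟩ := hex
  rw [specRad]
  apply le_antisymm
  · apply aux_foldr_le _ _ hd.le
    intro x hx
    obtain ⟨ν, hν, rfl⟩ := Multiset.mem_map.mp hx
    exact hub ν hν
  · have : d ∈ (B.charpoly.roots).map (fun z : ℂ => ‖z‖) :=
      Multiset.mem_map.mpr ⟨μ, hμr, hμd⟩
    exact aux_le_foldr _ d this
end
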